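/- The integral equation G(α,β) = f(α) + c ∫_0^α ∫_0^β G(s,t) dt ds with f continuous and bounded by M on [0,2L] has a continuous solution on T obtained by successive approximations, and this solution satisfies |G(α,β)| ≤ M e^{|c| α β} ≤ M e^{|c| L²}. -/

import Mathlib

open Set intervalIntegral

/-- Successive approximations for the Goursat integral equation:
`G₀(α,β) = f(α)`, `G_{n+1}(α,β) = f(α) + c ∫_0^α ∫_0^β G_n`. -/
noncomputable def goursatApprox (c : ℝ) (f : ℝ → ℝ) : ℕ → ℝ → ℝ → ℝ
  | 0 => fun α _ => f α
  | n + 1 => fun α β =>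
      f α + c * ∫ s in (0:ℝ)..α, ∫ t in (0:ℝ)..β, goursatApprox c f n s t

lemma goursat_cont (c : ℝ) (F : ℝ → ℝ) (hF : Continuous F) (n : ℕ) :
    Continuous (fun p : ℝ × ℝ => goursatApprox c F n p.1 p.2) := by
  induction n with
  | zero => exact hF.comp continuous_fst
  | succ n ih =>
    have hin : Continuous (fun q : ℝ × ℝ => ∫ t in (0:ℝ)..q.2, goursatApprox c F n q.1 t) := by
      apply intervalIntegral.continuous_parametric_intervalIntegral_of_continuous
        (f := fun (q : ℝ × ℝ) (t : ℝ) => goursatApprox c F n q.1 t) ?_ continuous_snd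
      exact ih.comp ((continuous_fst.fst).prodMk continuous_snd)
    have hout : Continuous (fun p : ℝ × ℝ =>
        ∫ s in (0:ℝ)..p.1, ∫ t in (0:ℝ)..p.2, goursatApprox c F n s t) := by
      apply intervalIntegral.continuous_parametric_intervalIntegral_of_continuous
        (f := fun (p : ℝ × ℝ) (s : ℝ) => ∫ t in (0:ℝ)..p.2, goursatApprox c F n s t)
        ?_ continuous_fst
      exact hin.comp (continuous_snd.prodMk continuous_fst.snd)
    show Continuous fun p : ℝ × ℝ => F p.1 + c * _
    exact (hF.comp continuous_fst).add (continuous_const.mul hout)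

lemma iter_int_bound (d : ℝ → ℝ → ℝ)
    (hd : Continuous fun p : ℝ × ℝ => d p.1 p.2)
    (K : ℝ) (hK : 0 ≤ K) (m : ℕ)
    (hb : ∀ s t : ℝ, 0 ≤ s → 0 ≤ t → |d s t| ≤ K * s ^ m * t ^ m)
    (α β : ℝ) (hα : 0 ≤ α) (hβ : 0 ≤ β) :
    |∫ s in (0:ℝ)..α, ∫ t in (0:ℝ)..β, d s t| ≤
      K * α ^ (m+1) * β ^ (m+1) / (((m:ℝ)+1))^2 := by
  have hm1 : (0:ℝ) < (m:ℝ) + 1 := by positivity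
  have hslice : ∀ s : ℝ, Continuous fun t => d s t := fun s =>
    hd.comp (Continuous.prodMk_right s)
  have hΦcont : Continuous fun s => ∫ t in (0:ℝ)..β, d s t :=
    intervalIntegral.continuous_parametric_intervalIntegral_of_continuous' hd 0 β
  have hinner : ∀ s : ℝ, 0 ≤ s →
      |∫ t in (0:ℝ)..β, d s t| ≤ K * s ^ m * (β ^ (m+1) / ((m:ℝ)+1)) := by
    intro s hs
    have h1 : |∫ t in (0:ℝ)..β, d s t| ≤ ∫ t in (0:ℝ)..β, |d s t| :=
      intervalIntegral.abs_integral_le_integral_abs hβ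
    have h2 : (∫ t in (0:ℝ)..β, |d s t|) ≤ ∫ t in (0:ℝ)..β, K * s ^ m * t ^ m := by
      apply intervalIntegral.integral_mono_on hβ
      · exact ((hslice s).abs).intervalIntegrable _ _
      · exact (by fun_prop : Continuous fun t : ℝ => K * s ^ m * t ^ m).intervalIntegrable _ _
      · intro t ht
        exact hb s t hs ht.1
    have h3 : (∫ t in (0:ℝ)..β, K * s ^ m * t ^ m) = K * s ^ m * (β ^ (m+1) / ((m:ℝ)+1)) := by
      rw [intervalIntegral.integral_const_mul, integral_pow]
      simp
    linarith [h1, h2, h3 ▸ h2]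
  have houter : |∫ s in (0:ℝ)..α, ∫ t in (0:ℝ)..β, d s t| ≤
      ∫ s in (0:ℝ)..α, K * (β ^ (m+1) / ((m:ℝ)+1)) * s ^ m := by
    have h1 : |∫ s in (0:ℝ)..α, ∫ t in (0:ℝ)..β, d s t| ≤
        ∫ s in (0:ℝ)..α, |∫ t in (0:ℝ)..β, d s t| :=
      intervalIntegral.abs_integral_le_integral_abs hα
    have h2 : (∫ s in (0:ℝ)..α, |∫ t in (0:ℝ)..β, d s t|) ≤
        ∫ s in (0:ℝ)..α, K * (β ^ (m+1) / ((m:ℝ)+1)) * s ^ m := by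
      apply intervalIntegral.integral_mono_on hα
      · exact hΦcont.abs.intervalIntegrable _ _
      · exact (by fun_prop : Continuous fun s : ℝ => K * (β ^ (m+1) / ((m:ℝ)+1)) * s ^ m).intervalIntegrable _ _
      · intro s hs
        calc |∫ t in (0:ℝ)..β, d s t| ≤ K * s ^ m * (β ^ (m+1) / ((m:ℝ)+1)) := hinner s hs.1
          _ = K * (β ^ (m+1) / ((m:ℝ)+1)) * s ^ m := by ring
    linarith
  have hval : (∫ s in (0:ℝ)..α, K * (β ^ (m+1) / ((m:ℝ)+1)) * s ^ m)
      = K * α ^ (m+1) * β ^ (m+1) / (((m:ℝ)+1))^2 := by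
    rw [intervalIntegral.integral_const_mul, integral_pow]
    field_simp
    ring
  rw [hval] at houter
  exact houter

lemma goursat_diff_bound (c M : ℝ) (F : ℝ → ℝ) (hF : Continuous F) (hM : 0 ≤ M)
    (hFM : ∀ x : ℝ, |F x| ≤ M) (n : ℕ) :
    ∀ α β : ℝ, 0 ≤ α → 0 ≤ β →
      |goursatApprox c F (n+1) α β - goursatApprox c F n α β| ≤
        M * |c| ^ (n+1) * α ^ (n+1) * β ^ (n+1) / (((n+1).factorial : ℝ))^2 := by
  induction n with
  | zero =>
    intro α β hα hβ
    have h0 : goursatApprox c F 1 α β - goursatApprox c F 0 α β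
        = c * ∫ s in (0:ℝ)..α, ∫ t in (0:ℝ)..β, F s := by
      simp [goursatApprox]
    have hb := iter_int_bound (fun s _ => F s) (hF.comp continuous_fst) M hM 0
      (fun s t hs ht => by simpa using hFM s) α β hα hβ
    have hb' : |∫ s in (0:ℝ)..α, ∫ t in (0:ℝ)..β, F s| ≤ M * α * β := by
      have h := hb
      norm_num at h ⊢
      exact h
    have h2 : |c| * |∫ s in (0:ℝ)..α, ∫ t in (0:ℝ)..β, F s| ≤ |c| * (M * α * β) :=
      mul_le_mul_of_nonneg_left hb' (abs_nonneg c)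
    rw [h0, abs_mul]
    have he : M * |c| ^ (0+1) * α ^ (0+1) * β ^ (0+1) / (((0+1).factorial : ℝ))^2
        = |c| * (M * α * β) := by
      norm_num [Nat.factorial]
      ring
    linarith [h2, he]
  | succ n ih =>
    intro α β hα hβ
    set g := goursatApprox c F with hg
    have hcont : ∀ k, Continuous (fun p : ℝ × ℝ => g k p.1 p.2) :=
      fun k => goursat_cont c F hF k
    set d : ℝ → ℝ → ℝ := fun s t => g (n+1) s t - g n s t with hd
    have hdc : Continuous fun p : ℝ × ℝ => d p.1 p.2 := (hcont (n+1)).sub (hcont n)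
    set K : ℝ := M * |c| ^ (n+1) / (((n+1).factorial : ℝ))^2 with hK
    have hK0 : 0 ≤ K := by positivity
    have hbd : ∀ s t : ℝ, 0 ≤ s → 0 ≤ t → |d s t| ≤ K * s ^ (n+1) * t ^ (n+1) := by
      intro s t hs ht
      calc |d s t| ≤ M * |c| ^ (n+1) * s ^ (n+1) * t ^ (n+1) / (((n+1).factorial : ℝ))^2 :=
            ih s t hs ht
        _ = K * s ^ (n+1) * t ^ (n+1) := by rw [hK]; ring
    -- rewrite the difference as c * double integral of d
    have hsliceC : ∀ k (s : ℝ), Continuous fun t => g k s t :=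
      fun k s => (hcont k).comp (Continuous.prodMk_right s)
    have houterC : ∀ k, Continuous fun s => ∫ t in (0:ℝ)..β, g k s t := fun k =>
      intervalIntegral.continuous_parametric_intervalIntegral_of_continuous' (hcont k) 0 β
    have hsplit : (∫ s in (0:ℝ)..α, ∫ t in (0:ℝ)..β, d s t)
        = (∫ s in (0:ℝ)..α, ∫ t in (0:ℝ)..β, g (n+1) s t)
          - ∫ s in (0:ℝ)..α, ∫ t in (0:ℝ)..β, g n s t := by
      rw [← intervalIntegral.integral_sub ((houterC (n+1)).intervalIntegrable _ _)
        ((houterC n).intervalIntegrable _ _)]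
      apply intervalIntegral.integral_congr
      intro s _
      exact intervalIntegral.integral_sub ((hsliceC (n+1) s).intervalIntegrable _ _)
        ((hsliceC n s).intervalIntegrable _ _)
    have e : ∀ (k : ℕ) (a b : ℝ), g (k+1) a b
        = F a + c * ∫ s in (0:ℝ)..a, ∫ t in (0:ℝ)..b, g k s t := fun k a b => rfl
    have hdiff : g (n+1+1) α β - g (n+1) α β
        = c * ∫ s in (0:ℝ)..α, ∫ t in (0:ℝ)..β, d s t := by
      rw [hsplit, e (n+1) α β, e n α β]
      ring
    have hb := iter_int_bound d hdc K hK0 (n+1) hbd α β hα hβ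
    rw [hdiff, abs_mul]
    refine (mul_le_mul_of_nonneg_left hb (abs_nonneg c)).trans (le_of_eq ?_)
    have hfact : (((n+1+1).factorial : ℝ)) = (((n:ℝ)+1)+1) * ((n+1).factorial : ℝ) := by
      rw [Nat.factorial_succ]; push_cast; ring
    have hf1 : (0:ℝ) < ((n+1).factorial : ℝ) := by positivity
    have hf2 : (0:ℝ) < ((n:ℝ)+1)+1 := by positivity
    rw [hK, hfact]
    push_cast
    field_simp
    ring

lemma goursat_exp_bound (c M : ℝ) (F : ℝ → ℝ) (hF : Continuous F) (hM : 0 ≤ M)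
    (hFM : ∀ x : ℝ, |F x| ≤ M) (n : ℕ) (α β : ℝ) (hα : 0 ≤ α) (hβ : 0 ≤ β) :
    |goursatApprox c F n α β| ≤ M * Real.exp (|c| * α * β) := by
  set g := goursatApprox c F with hg
  set x : ℝ := |c| * α * β with hx
  have hx0 : 0 ≤ x := by positivity
  have hsum : g n α β = g 0 α β + ∑ k ∈ Finset.range n, (g (k+1) α β - g k α β) := by
    rw [Finset.sum_range_sub (f := fun k => g k α β)]
    ring
  have habs : |g n α β| ≤ M + ∑ k ∈ Finset.range n, |g (k+1) α β - g k α β| := by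
    rw [hsum]
    refine (abs_add_le _ _).trans (add_le_add (hFM α) ?_)
    exact Finset.abs_sum_le_sum_abs _ _
  have hterm : ∀ k : ℕ, |g (k+1) α β - g k α β| ≤ M * x ^ (k+1) / ((k+1).factorial : ℝ) := by
    intro k
    have h1 := goursat_diff_bound c M F hF hM hFM k α β hα hβ
    have h2 : M * |c| ^ (k+1) * α ^ (k+1) * β ^ (k+1) / (((k+1).factorial : ℝ))^2
        = M * x ^ (k+1) / (((k+1).factorial : ℝ))^2 := by
      rw [hx, mul_pow, mul_pow]; ring
    have hfp : (1:ℝ) ≤ ((k+1).factorial : ℝ) := by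
      exact_mod_cast Nat.one_le_iff_ne_zero.mpr (Nat.factorial_ne_zero _)
    have h3 : M * x ^ (k+1) / (((k+1).factorial : ℝ))^2 ≤ M * x ^ (k+1) / ((k+1).factorial : ℝ) := by
      apply div_le_div_of_nonneg_left (by positivity) (by positivity)
      nlinarith
    linarith [h2 ▸ h1]
  have hsum2 : M + ∑ k ∈ Finset.range n, M * x ^ (k+1) / ((k+1).factorial : ℝ)
      = M * ∑ i ∈ Finset.range (n+1), x ^ i / (i.factorial : ℝ) := by
    rw [Finset.sum_range_succ' (f := fun i => x ^ i / (i.factorial : ℝ))]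
    rw [mul_add, Finset.mul_sum]
    simp only [mul_div_assoc]
    rw [add_comm]
    norm_num
  have hexp : (∑ i ∈ Finset.range (n+1), x ^ i / (i.factorial : ℝ)) ≤ Real.exp x :=
    Real.sum_le_exp_of_nonneg hx0 _
  calc |g n α β| ≤ M + ∑ k ∈ Finset.range n, |g (k+1) α β - g k α β| := habs
    _ ≤ M + ∑ k ∈ Finset.range n, M * x ^ (k+1) / ((k+1).factorial : ℝ) := by
        gcongr with k hk
        exact hterm k
    _ = M * ∑ i ∈ Finset.range (n+1), x ^ i / (i.factorial : ℝ) := hsum2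
    _ ≤ M * Real.exp x := by
        exact mul_le_mul_of_nonneg_left hexp hM

/-- Existence for the integral form of the Goursat problem: the successive approximations
converge uniformly on the triangle `T = {α ≥ 0, β ≥ 0, α + β ≤ 2L}` to a continuous
solution `G` of `G(α,β) = f(α) + c ∫_0^α ∫_0^β G(s,t) dt ds`, which satisfies
`|G(α,β)| ≤ M e^{|c| α β} ≤ M e^{|c| L²}`. -/
theorem goursat_existence
    (L c M : ℝ) (hL : 0 < L)
    (f : ℝ → ℝ) (hf : ContinuousOn f (Icc 0 (2 * L)))
    (hfM : ∀ x ∈ Icc (0:ℝ) (2 * L), |f x| ≤ M) :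
    ∃ G : ℝ → ℝ → ℝ,
      ContinuousOn (fun p : ℝ × ℝ => G p.1 p.2)
        {p : ℝ × ℝ | 0 ≤ p.1 ∧ 0 ≤ p.2 ∧ p.1 + p.2 ≤ 2 * L} ∧
      TendstoUniformlyOn (fun n (p : ℝ × ℝ) => goursatApprox c f n p.1 p.2)
        (fun p : ℝ × ℝ => G p.1 p.2) Filter.atTop
        {p : ℝ × ℝ | 0 ≤ p.1 ∧ 0 ≤ p.2 ∧ p.1 + p.2 ≤ 2 * L} ∧
      (∀ α β : ℝ, 0 ≤ α → 0 ≤ β → α + β ≤ 2 * L →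
        G α β = f α + c * ∫ s in (0:ℝ)..α, ∫ t in (0:ℝ)..β, G s t) ∧
      (∀ α β : ℝ, 0 ≤ α → 0 ≤ β → α + β ≤ 2 * L →
        |G α β| ≤ M * Real.exp (|c| * α * β) ∧
        |G α β| ≤ M * Real.exp (|c| * L ^ 2)) := by
  have h2L : (0:ℝ) ≤ 2 * L := by linarith
  set T : Set (ℝ × ℝ) := {p : ℝ × ℝ | 0 ≤ p.1 ∧ 0 ≤ p.2 ∧ p.1 + p.2 ≤ 2 * L} with hTdef
  set F : ℝ → ℝ := IccExtend h2L ((Icc (0:ℝ) (2*L)).restrict f) with hFdef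
  have hFc : Continuous F := hf.restrict.Icc_extend'
  have hFM : ∀ x : ℝ, |F x| ≤ M := fun x => hfM _ (projIcc (0:ℝ) (2*L) h2L x).2
  have hM0 : 0 ≤ M := le_trans (abs_nonneg _) (hfM 0 ⟨le_refl 0, h2L⟩)
  have hFI : ∀ x ∈ Icc (0:ℝ) (2*L), F x = f x := fun x hx => IccExtend_of_mem h2L _ hx
  set g : ℕ → ℝ → ℝ → ℝ := goursatApprox c F with hgdef
  have hcont : ∀ n, Continuous (fun p : ℝ × ℝ => g n p.1 p.2) :=
    fun n => goursat_cont c F hFc n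
  have hdiff := goursat_diff_bound c M F hFc hM0 hFM
  have hexp := goursat_exp_bound c M F hFc hM0 hFM
  have hmemT : ∀ p : ℝ × ℝ, p ∈ T → p.1 ∈ Icc (0:ℝ) (2*L) := by
    rintro p ⟨h1, h2, h3⟩
    exact ⟨h1, by linarith⟩
  -- equality of the two approximation schemes on the relevant region
  have heqf : ∀ (n : ℕ) (α β : ℝ), α ∈ Icc (0:ℝ) (2*L) →
      goursatApprox c f n α β = g n α β := by
    intro n
    induction n with
    | zero => intro α β hα; exact (hFI α hα).symm
    | succ n ih =>
      intro α β hα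
      show f α + c * _ = F α + c * _
      rw [hFI α hα]
      congr 2
      apply intervalIntegral.integral_congr
      intro s hs
      have hsI : s ∈ Icc (0:ℝ) (2*L) := by
        rw [uIcc_of_le hα.1] at hs
        exact ⟨hs.1, le_trans hs.2 hα.2⟩
      exact intervalIntegral.integral_congr fun t _ => ih s t hsI
  -- summable majorant
  set x0 : ℝ := |c| * L^2 with hx0def
  have hx00 : 0 ≤ x0 := by positivity
  set u : ℕ → ℝ := fun k => M * (x0 ^ (k+1) / ((k+1).factorial : ℝ)) with hu
  have husum : Summable u := by
    have h1 : Summable (fun k : ℕ => x0 ^ k / (k.factorial : ℝ)) :=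
      Real.summable_pow_div_factorial x0
    exact ((summable_nat_add_iff 1).2 h1).mul_left M
  have hDb : ∀ (k : ℕ) (p : ℝ × ℝ), p ∈ T →
      ‖g (k+1) p.1 p.2 - g k p.1 p.2‖ ≤ u k := by
    rintro k p ⟨h1, h2, h3⟩
    have hab : p.1 * p.2 ≤ L^2 := by
      nlinarith [sq_nonneg (p.1 - p.2), mul_self_le_mul_self (by linarith : (0:ℝ) ≤ p.1 + p.2) h3]
    have hca : |c| * (p.1 * p.2) ≤ x0 := by
      rw [hx0def]; exact mul_le_mul_of_nonneg_left hab (abs_nonneg c)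
    have hfp : (1:ℝ) ≤ ((k+1).factorial : ℝ) := by
      exact_mod_cast Nat.one_le_iff_ne_zero.mpr (Nat.factorial_ne_zero _)
    rw [Real.norm_eq_abs]
    refine (hdiff k p.1 p.2 h1 h2).trans ?_
    have e1 : M * |c| ^ (k+1) * p.1 ^ (k+1) * p.2 ^ (k+1) / (((k+1).factorial : ℝ))^2
        = M * (|c| * (p.1 * p.2)) ^ (k+1) / (((k+1).factorial : ℝ))^2 := by
      rw [mul_pow, mul_pow]; ring
    rw [e1]
    have e2 : (|c| * (p.1 * p.2)) ^ (k+1) ≤ x0 ^ (k+1) :=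
      pow_le_pow_left₀ (by positivity) hca _
    have e3 : M * (|c| * (p.1 * p.2)) ^ (k+1) / (((k+1).factorial : ℝ))^2
        ≤ M * x0 ^ (k+1) / (((k+1).factorial : ℝ))^2 := by
      apply div_le_div_of_nonneg_right ?_ (by positivity)
      exact mul_le_mul_of_nonneg_left e2 hM0
    refine e3.trans ?_
    rw [hu]
    rw [mul_div_assoc]
    apply mul_le_mul_of_nonneg_left ?_ hM0
    apply div_le_div_of_nonneg_left (by positivity) (by positivity)
    nlinarith
  -- uniform convergence of the telescoping series
  have huc0 : TendstoUniformlyOn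
      (fun N (p : ℝ × ℝ) => ∑ k ∈ Finset.range N, (g (k+1) p.1 p.2 - g k p.1 p.2))
      (fun p : ℝ × ℝ => ∑' k, (g (k+1) p.1 p.2 - g k p.1 p.2)) Filter.atTop T :=
    tendstoUniformlyOn_tsum_nat husum hDb
  set G : ℝ → ℝ → ℝ := fun a b => F a + ∑' k, (g (k+1) a b - g k a b) with hGdef
  have hconst : TendstoUniformlyOn (fun _ : ℕ => fun p : ℝ × ℝ => F p.1)
      (fun p : ℝ × ℝ => F p.1) Filter.atTop T :=
    fun uu hu => Filter.Eventually.of_forall fun _ => fun _ _ => refl_mem_uniformity hu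
  have hguF : TendstoUniformlyOn (fun n (p : ℝ × ℝ) => g n p.1 p.2)
      (fun p : ℝ × ℝ => G p.1 p.2) Filter.atTop T := by
    have hadd := hconst.add huc0
    have hEq : ∀ (n : ℕ) (p : ℝ × ℝ), p ∈ T →
        F p.1 + ∑ k ∈ Finset.range n, (g (k+1) p.1 p.2 - g k p.1 p.2) = g n p.1 p.2 := by
      intro n p _
      rw [Finset.sum_range_sub (f := fun k => g k p.1 p.2)]
      have : g 0 p.1 p.2 = F p.1 := rfl
      rw [this]; ring
    exact hadd.congr (Filter.Eventually.of_forall fun n => fun p hp => hEq n p hp)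
  have hcontG : ContinuousOn (fun p : ℝ × ℝ => G p.1 p.2) T :=
    hguF.continuousOn (Filter.Eventually.of_forall fun n => (hcont n).continuousOn).frequently
  have htd : ∀ p ∈ T, Filter.Tendsto (fun n => g n p.1 p.2) Filter.atTop (nhds (G p.1 p.2)) :=
    fun p hp => hguF.tendsto_at hp
  have huff : TendstoUniformlyOn (fun n (p : ℝ × ℝ) => goursatApprox c f n p.1 p.2)
      (fun p : ℝ × ℝ => G p.1 p.2) Filter.atTop T :=
    hguF.congr (Filter.Eventually.of_forall fun n => fun p hp => (heqf n p.1 p.2 (hmemT p hp)).symm)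
  refine ⟨G, hcontG, huff, ?_, ?_⟩
  · -- integral equation
    intro α β hα hβ hsum
    have hp : ((α, β) : ℝ × ℝ) ∈ T := ⟨hα, hβ, hsum⟩
    have hrect : ∀ s t : ℝ, s ∈ Icc (0:ℝ) α → t ∈ Icc (0:ℝ) β → ((s, t) : ℝ × ℝ) ∈ T := by
      rintro s t ⟨hs0, hs1⟩ ⟨ht0, ht1⟩
      exact ⟨hs0, ht0, by simp only; linarith⟩
    have hGslc : ∀ s ∈ Icc (0:ℝ) α, ContinuousOn (fun t => G s t) (Icc (0:ℝ) β) := by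
      intro s hs
      have h2 : Continuous (fun t : ℝ => ((s, t) : ℝ × ℝ)) := by fun_prop
      exact hcontG.comp h2.continuousOn (fun t ht => hrect s t hs ht)
    have hGsl : ∀ s ∈ Icc (0:ℝ) α,
        IntervalIntegrable (fun t => G s t) MeasureTheory.volume 0 β := by
      intro s hs
      apply ContinuousOn.intervalIntegrable
      rw [uIcc_of_le hβ]
      exact hGslc s hs
    have hone : ∀ n, Continuous fun s => ∫ t in (0:ℝ)..β, g n s t := fun n =>
      intervalIntegral.continuous_parametric_intervalIntegral_of_continuous' (hcont n) 0 β
    have hu2 : TendstoUniformlyOn (fun n s => ∫ t in (0:ℝ)..β, g n s t)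
        (fun s => ∫ t in (0:ℝ)..β, G s t) Filter.atTop (Icc (0:ℝ) α) := by
      rw [Metric.tendstoUniformlyOn_iff]
      intro ε hε
      have hε' : 0 < ε / (β + 1) := by positivity
      filter_upwards [Metric.tendstoUniformlyOn_iff.1 hguF (ε/(β+1)) hε'] with n hn
      intro s hs
      have hslcont : Continuous fun t => g n s t :=
        (hcont n).comp (Continuous.prodMk_right s)
      have hint : (∫ t in (0:ℝ)..β, G s t) - ∫ t in (0:ℝ)..β, g n s t
          = ∫ t in (0:ℝ)..β, (G s t - g n s t) :=
        (intervalIntegral.integral_sub (hGsl s hs) (hslcont.intervalIntegrable _ _)).symm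
      rw [Real.dist_eq, hint]
      have hb : ∀ t ∈ Set.uIoc (0:ℝ) β, ‖G s t - g n s t‖ ≤ ε / (β+1) := by
        intro t ht
        rw [uIoc_of_le hβ] at ht
        have htm : ((s, t) : ℝ × ℝ) ∈ T := hrect s t hs ⟨le_of_lt ht.1, ht.2⟩
        have := hn (s, t) htm
        rw [Real.dist_eq] at this
        exact le_of_lt this
      have := intervalIntegral.norm_integral_le_of_norm_le_const hb
      rw [Real.norm_eq_abs] at this
      have hfin : ε / (β+1) * |β - 0| < ε := by
        rw [sub_zero, abs_of_nonneg hβ]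
        rw [div_mul_eq_mul_div, div_lt_iff₀ (by positivity)]
        nlinarith
      exact lt_of_le_of_lt this hfin
    have hGoutc : ContinuousOn (fun s => ∫ t in (0:ℝ)..β, G s t) (Icc (0:ℝ) α) :=
      hu2.continuousOn (Filter.Eventually.of_forall fun n => (hone n).continuousOn).frequently
    have hGout_int : IntervalIntegrable (fun s => ∫ t in (0:ℝ)..β, G s t)
        MeasureTheory.volume 0 α := by
      apply ContinuousOn.intervalIntegrable
      rwa [uIcc_of_le hα]
    have htdI : Filter.Tendsto (fun n => ∫ s in (0:ℝ)..α, ∫ t in (0:ℝ)..β, g n s t)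
        Filter.atTop (nhds (∫ s in (0:ℝ)..α, ∫ t in (0:ℝ)..β, G s t)) := by
      rw [Metric.tendsto_atTop]
      intro ε hε
      have hε' : 0 < ε / (α + 1) := by positivity
      obtain ⟨N, hN⟩ := Filter.eventually_atTop.1
        (Metric.tendstoUniformlyOn_iff.1 hu2 (ε/(α+1)) hε')
      refine ⟨N, fun n hn => ?_⟩
      have hint : (∫ s in (0:ℝ)..α, ∫ t in (0:ℝ)..β, g n s t)
            - ∫ s in (0:ℝ)..α, ∫ t in (0:ℝ)..β, G s t
          = ∫ s in (0:ℝ)..α, ((∫ t in (0:ℝ)..β, g n s t) - ∫ t in (0:ℝ)..β, G s t) :=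
        (intervalIntegral.integral_sub ((hone n).intervalIntegrable _ _) hGout_int).symm
      rw [Real.dist_eq, hint]
      have hb : ∀ s ∈ Set.uIoc (0:ℝ) α,
          ‖(∫ t in (0:ℝ)..β, g n s t) - ∫ t in (0:ℝ)..β, G s t‖ ≤ ε / (α+1) := by
        intro s hs
        rw [uIoc_of_le hα] at hs
        have := hN n hn s ⟨le_of_lt hs.1, hs.2⟩
        rw [Real.dist_eq, abs_sub_comm] at this
        exact le_of_lt this
      have := intervalIntegral.norm_integral_le_of_norm_le_const hb
      rw [Real.norm_eq_abs] at this
      have hfin : ε / (α+1) * |α - 0| < ε := by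
        rw [sub_zero, abs_of_nonneg hα]
        rw [div_mul_eq_mul_div, div_lt_iff₀ (by positivity)]
        nlinarith
      exact lt_of_le_of_lt this hfin
    have hfinal : Filter.Tendsto (fun n => g (n+1) α β) Filter.atTop (nhds (G α β)) :=
      (htd (α, β) hp).comp (Filter.tendsto_add_atTop_nat 1)
    have hform : ∀ n : ℕ, g (n+1) α β
        = F α + c * ∫ s in (0:ℝ)..α, ∫ t in (0:ℝ)..β, g n s t := fun n => rfl
    have hlim2 : Filter.Tendsto (fun n => g (n+1) α β) Filter.atTop
        (nhds (F α + c * ∫ s in (0:ℝ)..α, ∫ t in (0:ℝ)..β, G s t)) := by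
      simp only [hform]
      exact ((htdI.const_mul c).const_add (F α))
    have heq := tendsto_nhds_unique hfinal hlim2
    rw [heq, hFI α ⟨hα, by linarith⟩]
  · -- bounds
    intro α β hα hβ hsum
    have hp : ((α, β) : ℝ × ℝ) ∈ T := ⟨hα, hβ, hsum⟩
    have habs : Filter.Tendsto (fun n => |g n α β|) Filter.atTop (nhds |G α β|) :=
      (htd (α, β) hp).abs
    have h1 : |G α β| ≤ M * Real.exp (|c| * α * β) :=
      le_of_tendsto habs (Filter.Eventually.of_forall fun n => hexp n α β hα hβ)
    refine ⟨h1, h1.trans ?_⟩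
    apply mul_le_mul_of_nonneg_left ?_ hM0
    apply Real.exp_le_exp.2
    have hab : α * β ≤ L^2 := by
      nlinarith [sq_nonneg (α - β), mul_self_le_mul_self (by linarith : (0:ℝ) ≤ α + β) hsum]
    calc |c| * α * β = |c| * (α * β) := by ring
      _ ≤ |c| * L^2 := mul_le_mul_of_nonneg_left hab (abs_nonneg c)
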